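/- Suppose φ: ℝ → ℝ satisfies tan φ(ξ) = -(σ̃/ν̃²)·tanh(σξ) where σ̃ = ν̃√(2 - ν̃²), σ = γr₀²σ̃, with γ, r₀ > 0 and 0 < ν̃ < √2, and φ takes values in (-π/2, π/2). Then φ satisfies the ODE dφ/dξ = γr₀²(ν̃² - 2cos²φ(ξ)). -/

import Mathlib

lemma tanh_hasDerivAt (x : ℝ) :
    HasDerivAt Real.tanh (1 - Real.tanh x ^ 2) x := by
  have hc : Real.cosh x ≠ 0 := (Real.cosh_pos x).ne'
  have h := (Real.hasDerivAt_sinh x).div (Real.hasDerivAt_cosh x) hc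
  have heq : (Real.sinh / Real.cosh) = Real.tanh := by
    funext y; rw [Pi.div_apply, Real.tanh_eq_sinh_div_cosh]
  rw [heq] at h
  refine h.congr_deriv ?_
  symm
  rw [Real.tanh_eq_sinh_div_cosh]
  have := Real.cosh_sq_sub_sinh_sq x
  field_simp

theorem stmt_11 (γ r₀ ν' : ℝ) (hγ : 0 < γ) (hr : 0 < r₀)
    (hν : 0 < ν') (hν2 : ν' < Real.sqrt 2)
    (σ' σ : ℝ) (hσ' : σ' = ν' * Real.sqrt (2 - ν' ^ 2)) (hσ : σ = γ * r₀ ^ 2 * σ')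
    (φ : ℝ → ℝ)
    (hφ : ∀ ξ, Real.tan (φ ξ) = -(σ' / ν' ^ 2) * Real.tanh (σ * ξ))
    (hrange : ∀ ξ, φ ξ ∈ Set.Ioo (-(Real.pi / 2)) (Real.pi / 2)) :
    ∀ ξ, HasDerivAt φ (γ * r₀ ^ 2 * (ν' ^ 2 - 2 * Real.cos (φ ξ) ^ 2)) ξ := by
  intro ξ
  set c : ℝ := -(σ' / ν' ^ 2) with hc
  have hν2' : ν' ^ 2 < 2 := by
    have h2 : (0:ℝ) ≤ 2 := by norm_num
    nlinarith [Real.sq_sqrt h2, Real.sqrt_nonneg 2]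
  have hpos : 0 < 2 - ν' ^ 2 := by linarith
  have hsq : σ' ^ 2 = ν' ^ 2 * (2 - ν' ^ 2) := by
    rw [hσ', mul_pow, Real.sq_sqrt hpos.le]
  have hνne : ν' ≠ 0 := hν.ne'
  -- φ equals arctan composed with the tanh expression
  have hφeq : φ = fun ξ => Real.arctan (c * Real.tanh (σ * ξ)) := by
    funext y
    rw [← hφ y, Real.arctan_tan (hrange y).1 (hrange y).2]
  -- derivative of the composite
  have htanh : HasDerivAt (fun y => c * Real.tanh (σ * y))
      (c * ((1 - Real.tanh (σ * ξ) ^ 2) * σ)) ξ := by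
    have := (((tanh_hasDerivAt (σ * ξ)).comp ξ
      ((hasDerivAt_id ξ).const_mul σ)).const_mul c)
    simpa using this
  have harctan := (Real.hasDerivAt_arctan (c * Real.tanh (σ * ξ))).comp ξ htanh
  rw [hφeq]
  refine harctan.congr_deriv ?_
  symm
  -- value equality
  set t := Real.tanh (σ * ξ) with ht
  have hcos : Real.cos (Real.arctan (c * t)) ^ 2 = 1 / (1 + (c * t) ^ 2) := by
    rw [Real.cos_arctan, div_pow, one_pow, Real.sq_sqrt]
    positivity
  rw [hcos]
  have hden : 1 + (c * t) ^ 2 ≠ 0 := by positivity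
  rw [hc, hσ]
  field_simp
  linear_combination hsq
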